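/- If A and B are positive semi-definite operators on a finite-dimensional real inner product space, then Kernel(A(A+B)⁺B) = Kernel(A) + Kernel(B). -/

import Mathlib

/-- `G` is the Moore-Penrose pseudo-inverse of `L` (Penrose conditions;
adjoint-symmetry of `L ∘ G` and `G ∘ L` expressed via `IsSymmetric`). -/
def IsMoorePenrose {V : Type*} [NormedAddCommGroup V] [InnerProductSpace ℝ V]
    (L G : V →ₗ[ℝ] V) : Prop :=
  L ∘ₗ (G ∘ₗ L) = L ∧ G ∘ₗ (L ∘ₗ G) = G ∧
  (L ∘ₗ G).IsSymmetric ∧ (G ∘ₗ L).IsSymmetric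

section Aux

variable {V : Type*} [NormedAddCommGroup V] [InnerProductSpace ℝ V]

/-- For a symmetric PSD operator, `⟪x, T x⟫ = 0` implies `T x = 0`. -/
lemma psd_inner_zero {T : V →ₗ[ℝ] V} (hT : T.IsSymmetric)
    (hpsd : ∀ x : V, 0 ≤ (inner ℝ x (T x) : ℝ)) {x : V}
    (hx : (inner ℝ x (T x) : ℝ) = 0) : T x = 0 := by
  have key : ∀ y : V, (inner ℝ y (T x) : ℝ) = 0 := by
    intro y
    by_contra hc
    set c : ℝ := inner ℝ y (T x) with hcdef
    set d : ℝ := inner ℝ y (T y) with hddef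
    have hd : 0 ≤ d := hpsd y
    set t : ℝ := -c / (d + 1) with htdef
    have h := hpsd (x + t • y)
    have hsym : (inner ℝ x (T y) : ℝ) = c := by
      rw [hcdef, ← hT y x, real_inner_comm]
    have expand : (inner ℝ (x + t • y) (T (x + t • y)) : ℝ)
        = 2 * t * c + t ^ 2 * d := by
      simp only [map_add, map_smul, inner_add_left, inner_add_right,
        real_inner_smul_left, real_inner_smul_right, hx, hsym, ← hcdef, ← hddef]
      ring
    rw [expand] at h
    have hdpos : (0:ℝ) < d + 1 := by linarith
    have hc2 : (0:ℝ) < c ^ 2 := by positivity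
    rw [htdef] at h
    have : 2 * (-c / (d + 1)) * c + (-c / (d + 1)) ^ 2 * d
        = (c ^ 2 * (-d - 2)) / (d + 1) ^ 2 := by
      field_simp
      ring
    rw [this] at h
    have hneg : (c ^ 2 * (-d - 2)) / (d + 1) ^ 2 < 0 := by
      apply div_neg_of_neg_of_pos
      · nlinarith
      · positivity
    linarith
  have := key (T x)
  exact inner_self_eq_zero.mp this

/-- For a symmetric operator on a finite-dimensional space,
`(ker T)ᗮ = range T`. -/
lemma orthogonal_ker_eq_range [FiniteDimensional ℝ V]
    {T : V →ₗ[ℝ] V} (hT : T.IsSymmetric) :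
    (LinearMap.ker T)ᗮ = LinearMap.range T := by
  have h1 : LinearMap.ker T = (LinearMap.range T)ᗮ := by
    ext x
    simp only [LinearMap.mem_ker, Submodule.mem_orthogonal]
    constructor
    · rintro hx u ⟨z, rfl⟩
      rw [hT z x, hx, inner_zero_right]
    · intro h
      have h2 := h (T (T x)) ⟨T x, rfl⟩
      rw [hT (T x) x] at h2
      exact inner_self_eq_zero.mp h2
  rw [h1, Submodule.orthogonal_orthogonal]

end Aux

theorem parallelSum_ker {V : Type*} [NormedAddCommGroup V] [InnerProductSpace ℝ V]
    [FiniteDimensional ℝ V] (A B : V →ₗ[ℝ] V)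
    (hA : A.IsSymmetric) (hB : B.IsSymmetric)
    (hApsd : ∀ x : V, 0 ≤ (inner ℝ x (A x) : ℝ)) (hBpsd : ∀ x : V, 0 ≤ (inner ℝ x (B x) : ℝ))
    (G : V →ₗ[ℝ] V) (hG : IsMoorePenrose (A + B) G) :
    LinearMap.ker (A ∘ₗ (G ∘ₗ B)) = LinearMap.ker A ⊔ LinearMap.ker B := by
  obtain ⟨h1, h2, h3, h4⟩ := hG
  set S : V →ₗ[ℝ] V := A + B with hSdef
  have hS : S.IsSymmetric := by
    intro u v
    simp only [hSdef, LinearMap.add_apply, inner_add_left, inner_add_right, hA u v, hB u v]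
  -- kernel of S is contained in both kernels
  have hkerS : ∀ x : V, S x = 0 → A x = 0 ∧ B x = 0 := by
    intro x hx
    have hsum : (inner ℝ x (A x) : ℝ) + (inner ℝ x (B x) : ℝ) = 0 := by
      have : (inner ℝ x (S x) : ℝ) = 0 := by rw [hx, inner_zero_right]
      simpa [hSdef, LinearMap.add_apply, inner_add_right] using this
    have hA0 : (inner ℝ x (A x) : ℝ) = 0 := le_antisymm (by linarith [hBpsd x]) (hApsd x)
    have hB0 : (inner ℝ x (B x) : ℝ) = 0 := by linarith
    exact ⟨psd_inner_zero hA hApsd hA0, psd_inner_zero hB hBpsd hB0⟩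
  have hSGS : ∀ w : V, S (G (S w)) = S w := by
    intro w
    have := DFunLike.congr_fun h1 w
    simpa [LinearMap.comp_apply] using this
  apply le_antisymm
  · intro x hx
    have hx' : A (G (B x)) = 0 := by
      simpa [LinearMap.comp_apply] using hx
    -- B x is orthogonal to ker S, hence in range S
    have hBx : B x ∈ LinearMap.range S := by
      rw [← orthogonal_ker_eq_range hS]
      rw [Submodule.mem_orthogonal]
      intro u hu
      have hBu : B u = 0 := (hkerS u hu).2
      rw [real_inner_comm, hB x u, hBu, inner_zero_right]
    obtain ⟨w, hw⟩ := hBx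
    have hSGB : S (G (B x)) = B x := by
      rw [← hw, hSGS]
    have hBy : B (G (B x)) = B x := by
      have hexp : S (G (B x)) = A (G (B x)) + B (G (B x)) := rfl
      rw [hSGB, hx', zero_add] at hexp
      exact hexp.symm
    rw [Submodule.mem_sup]
    refine ⟨G (B x), hx', x - G (B x), ?_, by abel⟩
    rw [LinearMap.mem_ker, map_sub, hBy, sub_self]
  · rw [sup_le_iff]
    constructor
    · intro x hx
      have hAx : A x = 0 := hx
      have hBx : B x = S x := by
        simp [hSdef, LinearMap.add_apply, hAx]
      rw [LinearMap.mem_ker, LinearMap.comp_apply, LinearMap.comp_apply, hBx]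
      have hk : S (G (S x) - x) = 0 := by
        rw [map_sub, hSGS, sub_self]
      have := (hkerS _ hk).1
      rw [map_sub, hAx, sub_zero] at this
      exact this
    · intro x hx
      have hBx : B x = 0 := hx
      rw [LinearMap.mem_ker, LinearMap.comp_apply, LinearMap.comp_apply, hBx, map_zero, map_zero]
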